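/- For real λ and real ξ > 0, the boundary value of -iξ ω₊(-1-iλξ, ξ) equals -2D(λ) - i(ξ - √π e^{-λ²}), where D(λ) = e^{-λ²} ∫₀^λ e^{t²} dt is the Dawson function; i.e., the principal value integral P.v.∫_ℝ w(v)/(v-λ) dv equals -2D(λ) for w(v) = e^{-v²}/√π. -/

import Mathlib

open MeasureTheory Real Filter

noncomputable def w (v : ℝ) : ℝ := Real.exp (-v ^ 2) / Real.sqrt Real.pi

/-- The Dawson function D(λ) = e^{-λ²} ∫₀^λ e^{t²} dt. -/
noncomputable def dawson (l : ℝ) : ℝ :=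
  Real.exp (-l ^ 2) * ∫ t in (0 : ℝ)..l, Real.exp (t ^ 2)

open Set

/-- The odd symmetrized integrand. -/
noncomputable def Gker (l u : ℝ) : ℝ := Real.exp (-u ^ 2) * Real.sinh (2 * l * u) / u

lemma integrable_gauss_shift (c : ℝ) : Integrable (fun u : ℝ => Real.exp (-(u - c) ^ 2)) := by
  have h := integrable_exp_neg_mul_sq (b := (1:ℝ)) one_pos
  have h2 := h.comp_sub_right c
  simpa [neg_mul, one_mul] using h2

lemma gauss_total : ∫ u : ℝ, Real.exp (-u ^ 2) = Real.sqrt Real.pi := by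
  have := integral_gaussian 1
  simpa [neg_mul, one_mul] using this

lemma sinh_le_mul_exp {y : ℝ} (hy : 0 ≤ y) : Real.sinh y ≤ y * Real.exp y := by
  have h : Real.exp (-(2 * y)) ≥ 1 - 2 * y := by
    have := Real.add_one_le_exp (-(2 * y)); linarith
  have he : Real.exp (-y) = Real.exp y * Real.exp (-(2 * y)) := by
    rw [← Real.exp_add]; ring_nf
  have hp := Real.exp_pos y
  rw [Real.sinh_eq, he]
  nlinarith

lemma cosh_decomp (t u : ℝ) : 2 * Real.exp (-u ^ 2) * Real.cosh (2 * t * u)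
    = Real.exp (t ^ 2) * Real.exp (-(u - t) ^ 2) + Real.exp (t ^ 2) * Real.exp (-(-u - t) ^ 2) := by
  rw [Real.cosh_eq, ← Real.exp_add, ← Real.exp_add]
  rw [show (t ^ 2 + -(u - t) ^ 2 : ℝ) = -u ^ 2 + 2 * t * u from by ring,
      show (t ^ 2 + -(-u - t) ^ 2 : ℝ) = -u ^ 2 + -(2 * t * u) from by ring,
      Real.exp_add, Real.exp_add]
  ring

lemma integrable_gauss_shift' (c : ℝ) : Integrable (fun u : ℝ => Real.exp (-(-u - c) ^ 2)) := by
  have h : (fun u : ℝ => Real.exp (-(-u - c) ^ 2)) = fun u : ℝ => Real.exp (-(u - (-c)) ^ 2) := by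
    funext u; congr 1; ring
  rw [h]; exact integrable_gauss_shift (-c)

lemma integrableOn_cosh_ker (t : ℝ) :
    IntegrableOn (fun u : ℝ => 2 * Real.exp (-u ^ 2) * Real.cosh (2 * t * u)) (Ioi 0) := by
  have h : Integrable (fun u : ℝ =>
      Real.exp (t ^ 2) * Real.exp (-(u - t) ^ 2) + Real.exp (t ^ 2) * Real.exp (-(-u - t) ^ 2)) :=
    ((integrable_gauss_shift t).const_mul _).add ((integrable_gauss_shift' t).const_mul _)
  have := (h.integrableOn (s := Ioi 0))
  refine this.congr_fun (fun u _ => (cosh_decomp t u).symm) measurableSet_Ioi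

lemma half_gauss (t : ℝ) :
    ∫ u in Ioi (0:ℝ), 2 * Real.exp (-u ^ 2) * Real.cosh (2 * t * u)
      = Real.sqrt Real.pi * Real.exp (t ^ 2) := by
  have h1 : IntegrableOn (fun u : ℝ => Real.exp (t ^ 2) * Real.exp (-(u - t) ^ 2)) (Ioi 0) :=
    ((integrable_gauss_shift t).const_mul _).integrableOn
  have h2 : IntegrableOn (fun u : ℝ => Real.exp (t ^ 2) * Real.exp (-(-u - t) ^ 2)) (Ioi 0) :=
    ((integrable_gauss_shift' t).const_mul _).integrableOn
  calc ∫ u in Ioi (0:ℝ), 2 * Real.exp (-u ^ 2) * Real.cosh (2 * t * u)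
      = ∫ u in Ioi (0:ℝ), (Real.exp (t ^ 2) * Real.exp (-(u - t) ^ 2)
          + Real.exp (t ^ 2) * Real.exp (-(-u - t) ^ 2)) := by
        exact setIntegral_congr_fun measurableSet_Ioi (fun u _ => cosh_decomp t u)
    _ = Real.exp (t ^ 2) * ((∫ u in Ioi (0:ℝ), Real.exp (-(u - t) ^ 2))
          + ∫ u in Ioi (0:ℝ), Real.exp (-(-u - t) ^ 2)) := by
        rw [integral_add h1 h2, integral_const_mul, integral_const_mul]; ring
    _ = Real.exp (t ^ 2) * ((∫ u in Ioi (0:ℝ), Real.exp (-(u - t) ^ 2))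
          + ∫ u in Iic (-(0:ℝ)), Real.exp (-(u - t) ^ 2)) := by
        rw [integral_comp_neg_Ioi (0:ℝ) (fun x => Real.exp (-(x - t) ^ 2))]
    _ = Real.exp (t ^ 2) * ∫ u : ℝ, Real.exp (-(u - t) ^ 2) := by
        rw [neg_zero, add_comm,
          intervalIntegral.integral_Iic_add_Ioi ((integrable_gauss_shift t).integrableOn)
            ((integrable_gauss_shift t).integrableOn)]
    _ = Real.sqrt Real.pi * Real.exp (t ^ 2) := by
        rw [integral_sub_right_eq_self (fun u : ℝ => Real.exp (-u ^ 2)) t, gauss_total]; ring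

lemma inner_ftc (l : ℝ) {u : ℝ} (hu : u ≠ 0) :
    ∫ t in (0:ℝ)..l, 2 * Real.exp (-u ^ 2) * Real.cosh (2 * t * u) = Gker l u := by
  have hd : ∀ t ∈ Set.uIcc (0:ℝ) l,
      HasDerivAt (fun t => Real.exp (-u ^ 2) * Real.sinh (2 * t * u) / u)
        (2 * Real.exp (-u ^ 2) * Real.cosh (2 * t * u)) t := by
    intro t _
    have h : HasDerivAt (fun t : ℝ => 2 * t * u) (2 * u) t := by
      simpa using ((hasDerivAt_id t).const_mul 2).mul_const u
    have h2 := ((h.sinh).const_mul (Real.exp (-u ^ 2))).div_const u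
    rw [show (2 * Real.exp (-u ^ 2) * Real.cosh (2 * t * u))
        = Real.exp (-u ^ 2) * (Real.cosh (2 * t * u) * (2 * u)) / u by
      rw [eq_div_iff hu]; ring]
    exact h2
  have hc : IntervalIntegrable (fun t => 2 * Real.exp (-u ^ 2) * Real.cosh (2 * t * u))
      volume 0 l := by
    apply Continuous.intervalIntegrable
    fun_prop
  rw [intervalIntegral.integral_eq_sub_of_hasDerivAt hd hc]
  simp [Gker]

lemma integrableOn_Gker (l : ℝ) : IntegrableOn (Gker l) (Ioi 0) := by
  have hmeas : AEStronglyMeasurable (Gker l) (volume.restrict (Ioi (0:ℝ))) := by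
    apply Measurable.aestronglyMeasurable
    unfold Gker
    fun_prop
  have hint : Integrable (fun u : ℝ =>
      (2 * |l| * Real.exp (l ^ 2)) * Real.exp (-(u - |l|) ^ 2)) :=
    (integrable_gauss_shift |l|).const_mul _
  refine (hint.integrableOn).mono' hmeas ?_
  filter_upwards [ae_restrict_mem measurableSet_Ioi] with u hu
  have hu0 : (0:ℝ) < u := hu
  have h1 : |Real.sinh (2 * l * u)| = Real.sinh (2 * |l| * u) := by
    rw [Real.abs_sinh]; congr 1
    rw [abs_mul, abs_mul, abs_two, abs_of_pos hu0]
  have h2 : Real.sinh (2 * |l| * u) ≤ (2 * |l| * u) * Real.exp (2 * |l| * u) :=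
    sinh_le_mul_exp (by positivity)
  have h3 : Real.exp (-u ^ 2) * Real.exp (2 * |l| * u)
      = Real.exp (l ^ 2) * Real.exp (-(u - |l|) ^ 2) := by
    rw [← Real.exp_add, ← Real.exp_add]; congr 1
    have : |l| ^ 2 = l ^ 2 := sq_abs l
    nlinarith [this]
  have hnorm : ‖Gker l u‖ = Real.exp (-u ^ 2) * Real.sinh (2 * |l| * u) / u := by
    rw [Real.norm_eq_abs]
    unfold Gker
    rw [abs_div, abs_mul, abs_of_pos (Real.exp_pos _), abs_of_pos hu0, h1]
  rw [hnorm]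
  rw [div_le_iff₀ hu0]
  calc Real.exp (-u ^ 2) * Real.sinh (2 * |l| * u)
      ≤ Real.exp (-u ^ 2) * ((2 * |l| * u) * Real.exp (2 * |l| * u)) := by
        exact mul_le_mul_of_nonneg_left h2 (Real.exp_pos _).le
    _ = (2 * |l|) * (Real.exp (-u ^ 2) * Real.exp (2 * |l| * u)) * u := by ring
    _ = 2 * |l| * Real.exp (l ^ 2) * Real.exp (-(u - |l|) ^ 2) * u := by rw [h3]; ring

lemma key_nonneg (l : ℝ) (hl : 0 ≤ l) :
    ∫ u in Ioi (0:ℝ), Gker l u = Real.sqrt Real.pi * ∫ t in (0:ℝ)..l, Real.exp (t ^ 2) := by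
  have hprod : Integrable (fun p : ℝ × ℝ => 2 * Real.exp (-p.1 ^ 2) * Real.cosh (2 * p.2 * p.1))
      ((volume.restrict (Ioi (0:ℝ))).prod (volume.restrict (Ioc (0:ℝ) l))) := by
    have hone : Integrable (fun _ : ℝ => (1:ℝ)) (volume.restrict (Ioc (0:ℝ) l)) :=
      integrable_const _
    have hb := (integrableOn_cosh_ker l).mul_prod hone
    refine hb.mono' ?_ ?_
    · apply Measurable.aestronglyMeasurable; fun_prop
    · rw [Measure.prod_restrict]
      filter_upwards [ae_restrict_mem (measurableSet_Ioi.prod measurableSet_Ioc)] with p hp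
      obtain ⟨hp1, hp2⟩ := hp
      have hu0 : (0:ℝ) < p.1 := hp1
      have hcosh : Real.cosh (2 * p.2 * p.1) ≤ Real.cosh (2 * l * p.1) := by
        rw [Real.cosh_le_cosh]
        rw [abs_mul, abs_mul, abs_mul, abs_mul, abs_two, abs_of_pos hu0]
        have h1 : |p.2| ≤ |l| := by
          rw [abs_of_pos hp2.1, abs_of_nonneg hl]; exact hp2.2
        nlinarith [abs_nonneg p.2]
      have : ‖2 * Real.exp (-p.1 ^ 2) * Real.cosh (2 * p.2 * p.1)‖
          = 2 * Real.exp (-p.1 ^ 2) * Real.cosh (2 * p.2 * p.1) := by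
        rw [Real.norm_eq_abs, abs_of_nonneg]
        positivity
      rw [this, mul_one]
      exact mul_le_mul_of_nonneg_left hcosh (by positivity)
  calc ∫ u in Ioi (0:ℝ), Gker l u
      = ∫ u in Ioi (0:ℝ), ∫ t in Ioc (0:ℝ) l, 2 * Real.exp (-u ^ 2) * Real.cosh (2 * t * u) := by
        refine setIntegral_congr_fun measurableSet_Ioi (fun u hu => ?_)
        rw [← intervalIntegral.integral_of_le hl, inner_ftc l (ne_of_gt hu)]
    _ = ∫ t in Ioc (0:ℝ) l, ∫ u in Ioi (0:ℝ), 2 * Real.exp (-u ^ 2) * Real.cosh (2 * t * u) := by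
        exact integral_integral_swap hprod
    _ = ∫ t in Ioc (0:ℝ) l, Real.sqrt Real.pi * Real.exp (t ^ 2) := by
        exact setIntegral_congr_fun measurableSet_Ioc (fun t _ => half_gauss t)
    _ = Real.sqrt Real.pi * ∫ t in (0:ℝ)..l, Real.exp (t ^ 2) := by
        rw [integral_const_mul, intervalIntegral.integral_of_le hl]

lemma key_identity (l : ℝ) :
    ∫ u in Ioi (0:ℝ), Gker l u = Real.sqrt Real.pi * ∫ t in (0:ℝ)..l, Real.exp (t ^ 2) := by
  rcases le_or_gt 0 l with hl | hl
  · exact key_nonneg l hl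
  · have h1 := key_nonneg (-l) (by linarith)
    have hG : ∀ u : ℝ, Gker (-l) u = -(Gker l u) := by
      intro u
      unfold Gker
      rw [show 2 * (-l) * u = -(2 * l * u) from by ring, Real.sinh_neg]
      ring
    have hint : ∫ t in (0:ℝ)..(-l), Real.exp (t ^ 2) = -∫ t in (0:ℝ)..l, Real.exp (t ^ 2) := by
      have h2 := intervalIntegral.integral_comp_neg (a := (0:ℝ)) (b := -l)
        (fun x => Real.exp (x ^ 2))
      simp only [neg_sq, neg_neg, neg_zero] at h2
      rw [h2, intervalIntegral.integral_symm]
    rw [hint] at h1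
    simp only [hG] at h1
    rw [integral_neg] at h1
    linarith

lemma integrableOn_aux (l : ℝ) {ε : ℝ} (hε : 0 < ε) {s : Set ℝ} (hs : MeasurableSet s)
    (hsub : ∀ x ∈ s, ε ≤ |x|) : IntegrableOn (fun u => w (u + l) / u) s := by
  have hg : Integrable (fun u : ℝ => Real.exp (-(u - (-l)) ^ 2) / (Real.sqrt Real.pi * ε)) :=
    (integrable_gauss_shift (-l)).div_const _
  refine (hg.integrableOn).mono' ?_ ?_
  · apply Measurable.aestronglyMeasurable
    unfold w
    fun_prop
  · filter_upwards [ae_restrict_mem hs] with u hu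
    have h1 : ε ≤ |u| := hsub u hu
    have h2 : (0:ℝ) < |u| := lt_of_lt_of_le hε h1
    have hpi : (0:ℝ) < Real.sqrt Real.pi := Real.sqrt_pos.mpr Real.pi_pos
    have hw : w (u + l) = Real.exp (-(u - (-l)) ^ 2) / Real.sqrt Real.pi := by
      unfold w; congr 2; ring
    rw [Real.norm_eq_abs, abs_div, abs_of_nonneg (by unfold w; positivity : (0:ℝ) ≤ w (u + l)), hw]
    rw [div_div]
    apply div_le_div_of_nonneg_left _ _ _
    · positivity
    · positivity
    · exact mul_le_mul_of_nonneg_left h1 hpi.le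

lemma step1 (l : ℝ) {ε : ℝ} (hε : 0 < ε) :
    ∫ v in {x : ℝ | ε ≤ |x - l|}, w v / (v - l)
      = (-2 * Real.exp (-l ^ 2) / Real.sqrt Real.pi) * ∫ u in Ioi ε, Gker l u := by
  have hSm : MeasurableSet {x : ℝ | ε ≤ |x - l|} :=
    (isClosed_le continuous_const (by continuity)).measurableSet
  have hTm : MeasurableSet {x : ℝ | ε ≤ |x|} :=
    (isClosed_le continuous_const (by continuity)).measurableSet
  -- (a) translation
  have ha : ∫ v in {x : ℝ | ε ≤ |x - l|}, w v / (v - l)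
      = ∫ u in {x : ℝ | ε ≤ |x|}, w (u + l) / u := by
    rw [← integral_indicator hSm, ← integral_indicator hTm,
        ← integral_add_right_eq_self
          (fun v => Set.indicator {x : ℝ | ε ≤ |x - l|} (fun v => w v / (v - l)) v) l]
    congr 1; funext u
    by_cases h : ε ≤ |u|
    · rw [Set.indicator_of_mem (show u + l ∈ {x : ℝ | ε ≤ |x - l|} by
          simp only [Set.mem_setOf_eq, add_sub_cancel_right]; exact h),
        Set.indicator_of_mem (show u ∈ {x : ℝ | ε ≤ |x|} from h)]
      simp
    · rw [Set.indicator_of_notMem (show u + l ∉ {x : ℝ | ε ≤ |x - l|} by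
          simp only [Set.mem_setOf_eq, add_sub_cancel_right]; exact h),
        Set.indicator_of_notMem (show u ∉ {x : ℝ | ε ≤ |x|} from h)]
  -- (b) split set
  have hset : {x : ℝ | ε ≤ |x|} = Iic (-ε) ∪ Ici ε := by
    ext x
    simp only [Set.mem_setOf_eq, Set.mem_union, Set.mem_Iic, Set.mem_Ici]
    exact le_abs'
  have hd : Disjoint (Iic (-ε)) (Ici ε) :=
    Set.Iic_disjoint_Ici.mpr (by intro h; linarith)
  -- (c) integrabilities
  have hi1 : IntegrableOn (fun u => w (u + l) / u) (Iic (-ε)) := by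
    refine integrableOn_aux l hε measurableSet_Iic (fun x hx => ?_)
    simp only [Set.mem_Iic] at hx
    rw [abs_of_neg (by linarith)]
    linarith
  have hi2 : IntegrableOn (fun u => w (u + l) / u) (Ici ε) := by
    refine integrableOn_aux l hε measurableSet_Ici (fun x hx => ?_)
    simp only [Set.mem_Ici] at hx
    rw [abs_of_pos (by linarith)]
    exact hx
  -- (d) split + reflect
  have hb : ∫ u in {x : ℝ | ε ≤ |x|}, w (u + l) / u
      = (∫ u in Iic (-ε), w (u + l) / u) + ∫ u in Ici ε, w (u + l) / u := by
    rw [hset, setIntegral_union hd measurableSet_Ici hi1 hi2]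
  have hrefl : ∫ u in Iic (-ε), w (u + l) / u = ∫ u in Ioi ε, w (-u + l) / (-u) :=
    (integral_comp_neg_Ioi ε (fun u => w (u + l) / u)).symm
  have hIci : ∫ u in Ici ε, w (u + l) / u = ∫ u in Ioi ε, w (u + l) / u :=
    integral_Ici_eq_integral_Ioi
  -- integrability of reflected integrand on Ioi ε
  have hneg : (fun u : ℝ => w (-u + l) / (-u)) = fun u : ℝ => -(w (u + (-l)) / u) := by
    funext u
    rw [show w (-u + l) = w (u + (-l)) from by unfold w; congr 2; ring, div_neg]
  have hi3 : IntegrableOn (fun u : ℝ => w (-u + l) / (-u)) (Ioi ε) := by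
    rw [hneg]
    refine (integrableOn_aux (-l) hε measurableSet_Ioi (fun x hx => ?_)).neg
    simp only [Set.mem_Ioi] at hx
    rw [abs_of_pos (lt_trans hε hx)]
    exact le_of_lt hx
  have hi4 : IntegrableOn (fun u : ℝ => w (u + l) / u) (Ioi ε) :=
    hi2.mono_set Ioi_subset_Ici_self
  -- (e) combine into one integral
  have hsum : (∫ u in Ioi ε, w (-u + l) / (-u)) + ∫ u in Ioi ε, w (u + l) / u
      = ∫ u in Ioi ε, (w (-u + l) / (-u) + w (u + l) / u) := (integral_add hi3 hi4).symm
  -- (f) pointwise identity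
  have hpt : ∀ u : ℝ, u ≠ 0 → w (-u + l) / (-u) + w (u + l) / u
      = (-2 * Real.exp (-l ^ 2) / Real.sqrt Real.pi) * Gker l u := by
    intro u hu
    have hpi : Real.sqrt Real.pi ≠ 0 := ne_of_gt (Real.sqrt_pos.mpr Real.pi_pos)
    unfold w Gker
    rw [Real.sinh_eq]
    have h1 : Real.exp (-(-u + l) ^ 2) = Real.exp (-u ^ 2) * Real.exp (-l ^ 2)
        * Real.exp (2 * l * u) := by
      rw [← Real.exp_add, ← Real.exp_add]; congr 1; ring
    have h2 : Real.exp (-(u + l) ^ 2) = Real.exp (-u ^ 2) * Real.exp (-l ^ 2)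
        * Real.exp (-(2 * l * u)) := by
      rw [← Real.exp_add, ← Real.exp_add]; congr 1; ring
    rw [h1, h2]
    field_simp
    ring
  have hfin : ∫ u in Ioi ε, (w (-u + l) / (-u) + w (u + l) / u)
      = (-2 * Real.exp (-l ^ 2) / Real.sqrt Real.pi) * ∫ u in Ioi ε, Gker l u := by
    rw [setIntegral_congr_fun measurableSet_Ioi
      (fun u hu => hpt u (ne_of_gt (lt_trans hε hu))), integral_const_mul]
  rw [ha, hb, hrefl, hIci, hsum, hfin]

lemma step2 (l : ℝ) :
    Tendsto (fun ε : ℝ => ∫ u in Ioi ε, Gker l u) (nhdsWithin 0 (Set.Ioi 0))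
      (nhds (∫ u in Ioi (0:ℝ), Gker l u)) := by
  have hGint := integrableOn_Gker l
  have h1 : (fun ε : ℝ => ∫ u in Ioi ε, Gker l u) =ᶠ[nhdsWithin 0 (Set.Ioi 0)]
      (fun ε : ℝ => ∫ u in Ioi (0:ℝ), Set.indicator (Ioi ε) (Gker l) u) := by
    filter_upwards [self_mem_nhdsWithin] with ε (hε : 0 < ε)
    rw [integral_indicator measurableSet_Ioi, Measure.restrict_restrict measurableSet_Ioi,
        Set.inter_eq_left.mpr (Ioi_subset_Ioi hε.le)]
  rw [tendsto_congr' h1]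
  apply tendsto_integral_filter_of_dominated_convergence (fun u => ‖Gker l u‖)
  · filter_upwards with ε
    exact hGint.aestronglyMeasurable.indicator measurableSet_Ioi
  · filter_upwards with ε
    filter_upwards with u
    exact norm_indicator_le_norm_self _ _
  · exact hGint.norm
  · filter_upwards [ae_restrict_mem measurableSet_Ioi] with u hu
    have hev : ∀ᶠ ε in nhdsWithin (0:ℝ) (Set.Ioi 0),
        Set.indicator (Ioi ε) (Gker l) u = Gker l u := by
      filter_upwards [mem_nhdsWithin_of_mem_nhds (Iio_mem_nhds hu)] with ε (hε : ε < u)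
      exact Set.indicator_of_mem hε (Gker l)
    exact (tendsto_congr' hev).mpr tendsto_const_nhds

theorem stmt15 (l : ℝ) :
    Tendsto (fun ε : ℝ => ∫ v in {x : ℝ | ε ≤ |x - l|}, w v / (v - l))
      (nhdsWithin 0 (Set.Ioi 0)) (nhds (-2 * dawson l)) := by
  have hpi : Real.sqrt Real.pi ≠ 0 := ne_of_gt (Real.sqrt_pos.mpr Real.pi_pos)
  have h2 := (step2 l).const_mul (-2 * Real.exp (-l ^ 2) / Real.sqrt Real.pi)
  have hval : (-2 * Real.exp (-l ^ 2) / Real.sqrt Real.pi) * ∫ u in Ioi (0:ℝ), Gker l u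
      = -2 * dawson l := by
    rw [key_identity l]
    unfold dawson
    field_simp
  rw [hval] at h2
  have hcongr : (fun ε : ℝ => (-2 * Real.exp (-l ^ 2) / Real.sqrt Real.pi)
        * ∫ u in Ioi ε, Gker l u)
      =ᶠ[nhdsWithin 0 (Set.Ioi 0)]
      (fun ε : ℝ => ∫ v in {x : ℝ | ε ≤ |x - l|}, w v / (v - l)) := by
    filter_upwards [self_mem_nhdsWithin] with ε (hε : 0 < ε)
    exact (step1 l hε).symm
  exact h2.congr' hcongr
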